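/- arXiv:2204.09017 — 4 statements merged into one kernel-verified Lean document; each statement's English description precedes it below -/
import Mathlib

section
/- Sharp Hausdorff–Young inequality for the QQPFT: for 1 ≤ p ≤ 2, 1/p + 1/q = 1, and f ∈ L²_ℍ(ℝ²) ∩ L^p_ℍ(ℝ²), one has ‖Q^{∧₁,∧₂}_ℍ f‖_{L^q} ≤ (2π)^{1/q - 1/p} A_p² / |B₁B₂|^{1/q} · ‖f‖_{L^p}, where A_p = (p^{1/p}/q^{1/q})^{1/2}. -/
open MeasureTheory Real
open scoped ENNReal

noncomputable section

/-- The real quaternions. -/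
abbrev ℍ := Quaternion ℝ

/-- The quaternion imaginary unit `i`. -/
def qi : ℍ := ⟨0, 1, 0, 0⟩

/-- The quaternion imaginary unit `j`. -/
def qj : ℍ := ⟨0, 0, 1, 0⟩

/-- Exponential in the quaternions. -/
def qexp (q : ℍ) : ℍ := NormedSpace.exp q

/-- A parameter tuple `∧ = (A,B,C,D,E)` with `B ≠ 0` for quadratic phase transforms. -/
structure QPParams where
  A : ℝ
  B : ℝ
  C : ℝ
  D : ℝ
  E : ℝ
  hB : B ≠ 0

/-- The QQPFT kernel with imaginary unit `i`. -/
def KerI (L : QPParams) (t ξ : ℝ) : ℍ :=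
  (1 / Real.sqrt (2 * π)) •
    qexp (-(L.A * t ^ 2 + L.B * t * ξ + L.C * ξ ^ 2 + L.D * t + L.E * ξ) • qi)

/-- The QQPFT kernel with imaginary unit `j`. -/
def KerJ (L : QPParams) (t ξ : ℝ) : ℍ :=
  (1 / Real.sqrt (2 * π)) •
    qexp (-(L.A * t ^ 2 + L.B * t * ξ + L.C * ξ ^ 2 + L.D * t + L.E * ξ) • qj)

/-- The two-sided quaternion quadratic phase Fourier transform. -/
def QQPFT (L1 L2 : QPParams) (f : ℝ × ℝ → ℍ) (ξ : ℝ × ℝ) : ℍ :=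
  ∫ t : ℝ × ℝ, KerI L1 t.1 ξ.1 * f t * KerJ L2 t.2 ξ.2

/-- The two-sided quaternion Fourier transform. -/
def QFT (f : ℝ × ℝ → ℍ) (ξ : ℝ × ℝ) : ℍ :=
  ∫ t : ℝ × ℝ, ((1 / Real.sqrt (2 * π)) • qexp (-(t.1 * ξ.1) • qi)) * f t *
    ((1 / Real.sqrt (2 * π)) • qexp (-(t.2 * ξ.2) • qj))

/-- The short time quaternion quadratic phase Fourier transform with window `g`. -/
def STQQPFT (L1 L2 : QPParams) (g f : ℝ × ℝ → ℍ) (x ξ : ℝ × ℝ) : ℍ :=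
  ∫ t : ℝ × ℝ, KerI L1 t.1 ξ.1 * (f t * star (g (t - x))) * KerJ L2 t.2 ξ.2

/-- The symmetric real scalar inner product `⟨f,g⟩ = ∫ Sc[f ḡ]`. -/
def scInner (f g : ℝ × ℝ → ℍ) : ℝ := ∫ x : ℝ × ℝ, (f x * star (g x)).re

/-- The phase factor `φ^i_{∧,r}(k,ξ)`. -/
def phiI (L : QPParams) (r k ξ : ℝ) : ℍ :=
  qexp (-(L.A * r ^ 2 * k ^ 2 + L.D * r * k + L.B * r * k * ξ
      - 4 * r ^ 2 * L.A ^ 2 * L.C * k ^ 2 / L.B ^ 2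
      - 4 * r * L.A * L.C * k * ξ / L.B - 2 * r * L.A * L.E * k / L.B) • qi)

/-- The phase factor `φ^j_{∧,r}(k,ξ)`. -/
def phiJ (L : QPParams) (r k ξ : ℝ) : ℍ :=
  qexp (-(L.A * r ^ 2 * k ^ 2 + L.D * r * k + L.B * r * k * ξ
      - 4 * r ^ 2 * L.A ^ 2 * L.C * k ^ 2 / L.B ^ 2
      - 4 * r * L.A * L.C * k * ξ / L.B - 2 * r * L.A * L.E * k / L.B) • qj)


/-! ### Auxiliary lemmas -/

theorem qexp_smul_add (x y : ℝ) (u : ℍ) : qexp ((x + y) • u) = qexp (x • u) * qexp (y • u) := by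
  unfold qexp
  rw [add_smul]
  letI : NormedAlgebra ℚ ℍ := .restrictScalars ℚ ℝ ℍ
  exact NormedSpace.exp_add_of_commute
    (by show _ = _; rw [smul_mul_smul_comm, smul_mul_smul_comm, mul_comm x y])

theorem norm_qexp_smul_qi (x : ℝ) : ‖qexp (x • qi)‖ = 1 := by
  unfold qexp
  rw [Quaternion.norm_exp]
  have h : (x • qi).re = 0 := by
    show x • (0:ℝ) = 0
    simp
  rw [h]
  simp

theorem norm_qexp_smul_qj (x : ℝ) : ‖qexp (x • qj)‖ = 1 := by
  unfold qexp
  rw [Quaternion.norm_exp]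
  have h : (x • qj).re = 0 := by
    show x • (0:ℝ) = 0
    simp
  rw [h]
  simp

theorem qexp_smul_qi_ne_zero (x : ℝ) : qexp (x • qi) ≠ 0 := by
  intro h
  have := norm_qexp_smul_qi x
  rw [h, norm_zero] at this
  norm_num at this

theorem qexp_smul_qj_ne_zero (x : ℝ) : qexp (x • qj) ≠ 0 := by
  intro h
  have := norm_qexp_smul_qj x
  rw [h, norm_zero] at this
  norm_num at this

/-- Two-sided multiplication by nonzero quaternions, as a continuous linear equivalence. -/
def mulLR (u v : ℍ) (hu : u ≠ 0) (hv : v ≠ 0) : ℍ ≃L[ℝ] ℍ where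
  toFun x := u * x * v
  invFun x := u⁻¹ * x * v⁻¹
  map_add' x y := by noncomm_ring
  map_smul' c x := by simp [mul_smul_comm, smul_mul_assoc]
  left_inv x := by
    show u⁻¹ * (u * x * v) * v⁻¹ = x
    rw [mul_assoc u x v, ← mul_assoc u⁻¹ u (x * v), inv_mul_cancel₀ hu, one_mul,
      mul_assoc x v v⁻¹, mul_inv_cancel₀ hv, mul_one]
  right_inv x := by
    show u * (u⁻¹ * x * v⁻¹) * v = x
    rw [mul_assoc u⁻¹ x v⁻¹, ← mul_assoc u u⁻¹ (x * v⁻¹), mul_inv_cancel₀ hu, one_mul,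
      mul_assoc x v⁻¹ v, inv_mul_cancel₀ hv, mul_one]
  continuous_toFun := by fun_prop
  continuous_invFun := by fun_prop

def phA1 (L : QPParams) (t : ℝ) : ℍ := qexp (-(L.A * t ^ 2 + L.D * t) • qi)
def phA2 (L : QPParams) (t : ℝ) : ℍ := qexp (-(L.A * t ^ 2 + L.D * t) • qj)
def phC1 (L : QPParams) (ξ : ℝ) : ℍ := qexp (-(L.C * ξ ^ 2 + L.E * ξ) • qi)
def phC2 (L : QPParams) (ξ : ℝ) : ℍ := qexp (-(L.C * ξ ^ 2 + L.E * ξ) • qj)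

/-- The chirp-modulated function `g`. -/
def gfun (L1 L2 : QPParams) (f : ℝ × ℝ → ℍ) (t : ℝ × ℝ) : ℍ :=
  phA1 L1 t.1 * f t * phA2 L2 t.2

theorem integrand_eq (L1 L2 : QPParams) (f : ℝ × ℝ → ℍ) (ξ t : ℝ × ℝ) :
    KerI L1 t.1 ξ.1 * f t * KerJ L2 t.2 ξ.2 =
      phC1 L1 ξ.1 *
        (((1 / Real.sqrt (2 * π)) • qexp (-(t.1 * (L1.B * ξ.1)) • qi)) * gfun L1 L2 f t *
          ((1 / Real.sqrt (2 * π)) • qexp (-(t.2 * (L2.B * ξ.2)) • qj))) * phC2 L2 ξ.2 := by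
  unfold KerI KerJ gfun phA1 phA2 phC1 phC2
  rw [show -(L1.A * t.1 ^ 2 + L1.B * t.1 * ξ.1 + L1.C * ξ.1 ^ 2 + L1.D * t.1 + L1.E * ξ.1)
      = -(L1.C * ξ.1 ^ 2 + L1.E * ξ.1) + (-(t.1 * (L1.B * ξ.1)) + -(L1.A * t.1 ^ 2 + L1.D * t.1))
      by ring,
    show -(L2.A * t.2 ^ 2 + L2.B * t.2 * ξ.2 + L2.C * ξ.2 ^ 2 + L2.D * t.2 + L2.E * ξ.2)
      = -(L2.A * t.2 ^ 2 + L2.D * t.2) + (-(t.2 * (L2.B * ξ.2)) + -(L2.C * ξ.2 ^ 2 + L2.E * ξ.2))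
      by ring,
    qexp_smul_add, qexp_smul_add, qexp_smul_add, qexp_smul_add]
  simp only [smul_mul_assoc, mul_smul_comm, mul_assoc, smul_smul]

/-- Factorization of the QQPFT through the QFT of the chirp-modulated function. -/
theorem QQPFT_eq (L1 L2 : QPParams) (f : ℝ × ℝ → ℍ) (ξ : ℝ × ℝ) :
    QQPFT L1 L2 f ξ =
      phC1 L1 ξ.1 * QFT (gfun L1 L2 f) (L1.B * ξ.1, L2.B * ξ.2) * phC2 L2 ξ.2 := by
  have hu : phC1 L1 ξ.1 ≠ 0 := qexp_smul_qi_ne_zero _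
  have hv : phC2 L2 ξ.2 ≠ 0 := qexp_smul_qj_ne_zero _
  unfold QQPFT
  calc ∫ t : ℝ × ℝ, KerI L1 t.1 ξ.1 * f t * KerJ L2 t.2 ξ.2
      = ∫ t : ℝ × ℝ, (mulLR (phC1 L1 ξ.1) (phC2 L2 ξ.2) hu hv)
          (((1 / Real.sqrt (2 * π)) • qexp (-(t.1 * (L1.B * ξ.1)) • qi)) * gfun L1 L2 f t *
            ((1 / Real.sqrt (2 * π)) • qexp (-(t.2 * (L2.B * ξ.2)) • qj))) := by
        exact integral_congr_ae (Filter.Eventually.of_forall fun t => integrand_eq L1 L2 f ξ t)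
    _ = phC1 L1 ξ.1 * QFT (gfun L1 L2 f) (L1.B * ξ.1, L2.B * ξ.2) * phC2 L2 ξ.2 := by
        rw [(mulLR (phC1 L1 ξ.1) (phC2 L2 ξ.2) hu hv).integral_comp_comm]
        rfl

theorem norm_gfun (L1 L2 : QPParams) (f : ℝ × ℝ → ℍ) (t : ℝ × ℝ) :
    ‖gfun L1 L2 f t‖ = ‖f t‖ := by
  unfold gfun phA1 phA2
  rw [norm_mul, norm_mul, norm_qexp_smul_qi, norm_qexp_smul_qj, one_mul, mul_one]

theorem norm_QQPFT (L1 L2 : QPParams) (f : ℝ × ℝ → ℍ) (ξ : ℝ × ℝ) :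
    ‖QQPFT L1 L2 f ξ‖ = ‖QFT (gfun L1 L2 f) (L1.B * ξ.1, L2.B * ξ.2)‖ := by
  rw [QQPFT_eq]
  unfold phC1 phC2
  rw [norm_mul, norm_mul, norm_qexp_smul_qi, norm_qexp_smul_qj, one_mul, mul_one]

theorem aesm_gfun (L1 L2 : QPParams) {f : ℝ × ℝ → ℍ}
    (hf : AEStronglyMeasurable f (volume : Measure (ℝ × ℝ))) :
    AEStronglyMeasurable (gfun L1 L2 f) (volume : Measure (ℝ × ℝ)) := by
  have h1 : Continuous fun t : ℝ × ℝ => phA1 L1 t.1 := by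
    unfold phA1 qexp
    letI : NormedAlgebra ℚ ℍ := .restrictScalars ℚ ℝ ℍ
    exact NormedSpace.exp_continuous.comp ((by fun_prop : Continuous fun t : ℝ × ℝ =>
      -(L1.A * t.1 ^ 2 + L1.D * t.1)).smul continuous_const)
  have h2 : Continuous fun t : ℝ × ℝ => phA2 L2 t.2 := by
    unfold phA2 qexp
    letI : NormedAlgebra ℚ ℍ := .restrictScalars ℚ ℝ ℍ
    exact NormedSpace.exp_continuous.comp ((by fun_prop : Continuous fun t : ℝ × ℝ =>
      -(L2.A * t.2 ^ 2 + L2.D * t.2)).smul continuous_const)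
  exact (h1.aestronglyMeasurable.mul hf).mul h2.aestronglyMeasurable

theorem prod_smul_left' {α β : Type*} [MeasurableSpace α] [MeasurableSpace β] (c : ℝ≥0∞)
    (μ : Measure α) (ν : Measure β) [SFinite μ] [SFinite ν] : (c • μ).prod ν = c • μ.prod ν := by
  ext s hs
  rw [Measure.prod_apply hs, Measure.smul_apply, Measure.prod_apply hs, smul_eq_mul,
    lintegral_smul_measure, smul_eq_mul]

theorem prod_smul_right' {α β : Type*} [MeasurableSpace α] [MeasurableSpace β] (c : ℝ≥0∞)
    (hc : c ≠ ⊤) (μ : Measure α) (ν : Measure β) [SFinite μ] [SFinite ν] :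
    μ.prod (c • ν) = c • μ.prod ν := by
  ext s hs
  rw [Measure.prod_apply hs, Measure.smul_apply, Measure.prod_apply hs, smul_eq_mul]
  simp_rw [Measure.smul_apply, smul_eq_mul]
  rw [lintegral_const_mul' _ _ hc]

theorem lintegral_scale (B1 B2 : ℝ) (h1 : B1 ≠ 0) (h2 : B2 ≠ 0) (G : ℝ × ℝ → ℝ≥0∞) :
    ∫⁻ ξ : ℝ × ℝ, G (B1 * ξ.1, B2 * ξ.2) = (ENNReal.ofReal |B1 * B2|)⁻¹ * ∫⁻ ξ, G ξ := by
  set T : (ℝ × ℝ) ≃ᵐ (ℝ × ℝ) :=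
    ((Homeomorph.mulLeft₀ B1 h1).prodCongr (Homeomorph.mulLeft₀ B2 h2)).toMeasurableEquiv with hT
  have hTapp : ∀ ξ : ℝ × ℝ, T ξ = (B1 * ξ.1, B2 * ξ.2) := fun ξ => rfl
  have key : Measure.map T volume = (ENNReal.ofReal |B1 * B2|)⁻¹ • volume := by
    have h : (T : (ℝ × ℝ) → (ℝ × ℝ)) = Prod.map (fun x => B1 * x) (fun x => B2 * x) := rfl
    rw [show (volume : Measure (ℝ × ℝ)) = (volume : Measure ℝ).prod volume from
      Measure.volume_eq_prod ℝ ℝ, h,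
      ← Measure.map_prod_map _ _ (measurable_const_mul B1) (measurable_const_mul B2),
      Real.map_volume_mul_left h1, Real.map_volume_mul_left h2,
      prod_smul_left', prod_smul_right' _ ENNReal.ofReal_ne_top, smul_smul]
    rw [← Measure.volume_eq_prod]
    congr 1
    rw [← ENNReal.ofReal_mul (abs_nonneg _), ← abs_mul, ← mul_inv, abs_inv,
      ENNReal.ofReal_inv_of_pos (by positivity : (0:ℝ) < |B1 * B2|)]
  calc ∫⁻ ξ : ℝ × ℝ, G (B1 * ξ.1, B2 * ξ.2) = ∫⁻ ξ, G (T ξ) := by simp_rw [hTapp]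
    _ = ∫⁻ ξ, G ξ ∂(Measure.map T volume) := (lintegral_map_equiv G T).symm
    _ = (ENNReal.ofReal |B1 * B2|)⁻¹ * ∫⁻ ξ, G ξ := by rw [key, lintegral_smul_measure, smul_eq_mul]
/-- sharp Hausdorff–Young inequality for the QQPFT, assuming the sharp
Hausdorff–Young inequality for the QFT (with `A_p² = p^(1/p)/q^(1/q)`). -/
theorem qqpft_sharp_hausdorff_young (L1 L2 : QPParams) (p q : ℝ)
    (hp1 : 1 ≤ p) (hp2 : p ≤ 2) (hpq : 1 / p + 1 / q = 1)
    (hQFT : ∀ g : ℝ × ℝ → ℍ, MemLp g (ENNReal.ofReal p) volume →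
      eLpNorm (QFT g) (ENNReal.ofReal q) volume ≤
        ENNReal.ofReal ((2 * π) ^ (1 / q - 1 / p) * (p ^ (1 / p) / q ^ (1 / q))) *
          eLpNorm g (ENNReal.ofReal p) volume)
    (f : ℝ × ℝ → ℍ) (hf2 : MemLp f 2 volume) (hfp : MemLp f (ENNReal.ofReal p) volume) :
    eLpNorm (QQPFT L1 L2 f) (ENNReal.ofReal q) volume ≤
      ENNReal.ofReal ((2 * π) ^ (1 / q - 1 / p) * (p ^ (1 / p) / q ^ (1 / q)) /
          |L1.B * L2.B| ^ (1 / q)) *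
        eLpNorm f (ENNReal.ofReal p) volume := by
  rcases le_or_gt q 0 with hq0 | hq0
  · rw [show ENNReal.ofReal q = 0 from ENNReal.ofReal_eq_zero.mpr hq0, eLpNorm_exponent_zero]
    exact zero_le
  · set g := gfun L1 L2 f with hgdef
    have hB1 := L1.hB
    have hB2 := L2.hB
    have hBpos : (0:ℝ) < |L1.B * L2.B| := by positivity
    have hgsn : eLpNorm g (ENNReal.ofReal p) volume = eLpNorm f (ENNReal.ofReal p) volume :=
      eLpNorm_congr_norm_ae (Filter.Eventually.of_forall fun t => norm_gfun L1 L2 f t)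
    have hgmem : MemLp g (ENNReal.ofReal p) volume :=
      ⟨aesm_gfun L1 L2 hfp.1, by rw [hgsn]; exact hfp.2⟩
    have hQ0 : ENNReal.ofReal q ≠ 0 := by simp [ENNReal.ofReal_eq_zero, not_le, hq0]
    have hQt : ENNReal.ofReal q ≠ ⊤ := ENNReal.ofReal_ne_top
    have hQr : (ENNReal.ofReal q).toReal = q := ENNReal.toReal_ofReal hq0.le
    have h1 : eLpNorm (QQPFT L1 L2 f) (ENNReal.ofReal q) volume =
        eLpNorm (fun ξ : ℝ × ℝ => QFT g (L1.B * ξ.1, L2.B * ξ.2)) (ENNReal.ofReal q) volume :=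
      eLpNorm_congr_norm_ae (Filter.Eventually.of_forall fun ξ => norm_QQPFT L1 L2 f ξ)
    have hscale := lintegral_scale L1.B L2.B hB1 hB2 (fun ξ => ‖QFT g ξ‖ₑ ^ q)
    have h2 : eLpNorm (fun ξ : ℝ × ℝ => QFT g (L1.B * ξ.1, L2.B * ξ.2))
          (ENNReal.ofReal q) volume
        = ENNReal.ofReal ((|L1.B * L2.B| ^ (1 / q))⁻¹) *
            eLpNorm (QFT g) (ENNReal.ofReal q) volume := by
      rw [eLpNorm_eq_lintegral_rpow_enorm_toReal hQ0 hQt, eLpNorm_eq_lintegral_rpow_enorm_toReal hQ0 hQt, hQr]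
      rw [show (∫⁻ ξ : ℝ × ℝ, ‖QFT g (L1.B * ξ.1, L2.B * ξ.2)‖ₑ ^ q ∂volume)
          = (ENNReal.ofReal |L1.B * L2.B|)⁻¹ * ∫⁻ ξ, ‖QFT g ξ‖ₑ ^ q ∂volume
          from hscale]
      rw [ENNReal.mul_rpow_of_nonneg _ _ (by positivity : (0:ℝ) ≤ 1 / q)]
      congr 1
      rw [← ENNReal.ofReal_inv_of_pos hBpos,
        ENNReal.ofReal_rpow_of_pos (inv_pos.mpr hBpos),
        Real.inv_rpow hBpos.le]
    calc eLpNorm (QQPFT L1 L2 f) (ENNReal.ofReal q) volume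
        = ENNReal.ofReal ((|L1.B * L2.B| ^ (1 / q))⁻¹) *
            eLpNorm (QFT g) (ENNReal.ofReal q) volume := by rw [h1, h2]
      _ ≤ ENNReal.ofReal ((|L1.B * L2.B| ^ (1 / q))⁻¹) *
            (ENNReal.ofReal ((2 * π) ^ (1 / q - 1 / p) * (p ^ (1 / p) / q ^ (1 / q))) *
              eLpNorm g (ENNReal.ofReal p) volume) := mul_le_mul_right (hQFT g hgmem) _
      _ = ENNReal.ofReal ((2 * π) ^ (1 / q - 1 / p) * (p ^ (1 / p) / q ^ (1 / q)) /
              |L1.B * L2.B| ^ (1 / q)) * eLpNorm f (ENNReal.ofReal p) volume := by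
          rw [hgsn, ← mul_assoc, ← ENNReal.ofReal_mul (by positivity), inv_mul_eq_div]
end
end

section
/- Scaling property of the STQQPFT: for λ ≠ 0 and f_λ(t) = (1/λ) f(t/λ), g_λ(t) = (1/λ) g(t/λ), one has (S^{∧₁,∧₂}_{ℍ,g_λ} f_λ)(x,ξ) = (S^{∧₁',∧₂'}_{ℍ,g} f)(x/λ, ξ), where ∧ₗ' = (λ²Aₗ, λBₗ, Cₗ, λDₗ, Eₗ) for l = 1,2. -/
open MeasureTheory Real
open scoped ENNReal

noncomputable section

/-- scaling property of the STQQPFT. -/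
theorem stqqpft_scaling (L1 L2 : QPParams) (g f : ℝ × ℝ → ℍ)
    (hg2 : MemLp g 2 volume) (hgi : MemLp g ⊤ volume) (hf : MemLp f 2 volume)
    (l : ℝ) (hl : l ≠ 0) (x ξ : ℝ × ℝ) :
    STQQPFT L1 L2 (fun t => (1 / l) • g ((1 / l) • t)) (fun t => (1 / l) • f ((1 / l) • t))
        x ξ =
      STQQPFT ⟨l ^ 2 * L1.A, l * L1.B, L1.C, l * L1.D, L1.E, mul_ne_zero hl L1.hB⟩
        ⟨l ^ 2 * L2.A, l * L2.B, L2.C, l * L2.D, L2.E, mul_ne_zero hl L2.hB⟩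
        g f ((1 / l) • x) ξ := by
  set L1' : QPParams := ⟨l ^ 2 * L1.A, l * L1.B, L1.C, l * L1.D, L1.E, mul_ne_zero hl L1.hB⟩
  set L2' : QPParams := ⟨l ^ 2 * L2.A, l * L2.B, L2.C, l * L2.D, L2.E, mul_ne_zero hl L2.hB⟩
  have hl2 : (l ^ 2 : ℝ) ≠ 0 := pow_ne_zero _ hl
  have key : ∀ t : ℝ × ℝ,
      KerI L1 t.1 ξ.1 *
          (((1 / l) • f ((1 / l) • t)) * star ((1 / l) • g ((1 / l) • (t - x)))) *
          KerJ L2 t.2 ξ.2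
        = (fun s : ℝ × ℝ => (l ^ 2)⁻¹ •
            (KerI L1' s.1 ξ.1 * (f s * star (g (s - (1 / l) • x))) * KerJ L2' s.2 ξ.2))
            ((1 / l) • t) := by
    intro t
    have hK1 : KerI L1' ((1 / l) • t).1 ξ.1 = KerI L1 t.1 ξ.1 := by
      simp only [KerI, L1', Prod.smul_fst, smul_eq_mul]
      congr 3
      field_simp
    have hK2 : KerJ L2' ((1 / l) • t).2 ξ.2 = KerJ L2 t.2 ξ.2 := by
      simp only [KerJ, L2', Prod.smul_snd, smul_eq_mul]
      congr 3
      field_simp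
    have hsub : ((1 / l) • t : ℝ × ℝ) - (1 / l) • x = (1 / l) • (t - x) := by
      rw [smul_sub]
    simp only [hsub, hK1, hK2]
    rw [Quaternion.star_smul]
    simp only [mul_smul_comm, smul_mul_assoc, smul_smul]
    congr 1
    field_simp
  unfold STQQPFT
  have hint := MeasureTheory.Measure.integral_comp_smul (μ := volume)
      (fun s : ℝ × ℝ => (l ^ 2)⁻¹ •
        (KerI L1' s.1 ξ.1 * (f s * star (g (s - (1 / l) • x))) * KerJ L2' s.2 ξ.2)) (1 / l)
  simp only [key]
  rw [hint, MeasureTheory.integral_smul]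
  have hfr : Module.finrank ℝ (ℝ × ℝ) = 2 := by simp
  rw [hfr, smul_smul]
  have : |((1 / l) ^ 2)⁻¹| * (l ^ 2)⁻¹ = 1 := by
    rw [abs_of_nonneg (by positivity)]
    field_simp
  rw [this, one_smul]
end
end

section
/- Relation between the quaternion quadratic phase ambiguity function and the STQQPFT: (A^{∧₁,∧₂}_ℍ(f,g))(x,ξ) = φ^i_{∧₁,-1/2}(x₁,ξ₁) · (S^{∧₁,∧₂}_{ℍ,g} f)(x, ξ'_x) · φ^j_{∧₂,-1/2}(x₂,ξ₂), where ξ'_x = (ξ₁ - A₁x₁/B₁, ξ₂ - A₂x₂/B₂). In particular |(A^{∧₁,∧₂}_ℍ(f,g))(x,ξ)| = |(S^{∧₁,∧₂}_{ℍ,g} f)(x,ξ'_x)|. -/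
open MeasureTheory Real
open scoped ENNReal

noncomputable section

/-- The two-sided quaternion quadratic phase ambiguity function. -/
def QQPAF (L1 L2 : QPParams) (f g : ℝ × ℝ → ℍ) (x ξ : ℝ × ℝ) : ℍ :=
  ∫ t : ℝ × ℝ, KerI L1 t.1 ξ.1 *
    (f (t + (1 / 2 : ℝ) • x) * star (g (t - (1 / 2 : ℝ) • x))) * KerJ L2 t.2 ξ.2


lemma qexp_add_qi (a b : ℝ) : qexp (a • qi) * qexp (b • qi) = qexp ((a + b) • qi) := by
  rw [qexp, qexp, qexp, add_smul, NormedSpace.exp_add_of_commute_of_mem_ball (𝕂 := ℝ)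
    (hx := (NormedSpace.expSeries_radius_eq_top ℝ ℍ).symm ▸ edist_lt_top _ _)
    (hy := (NormedSpace.expSeries_radius_eq_top ℝ ℍ).symm ▸ edist_lt_top _ _)]
  exact ((Commute.refl qi).smul_left a).smul_right b

lemma qexp_add_qj (a b : ℝ) : qexp (a • qj) * qexp (b • qj) = qexp ((a + b) • qj) := by
  rw [qexp, qexp, qexp, add_smul, NormedSpace.exp_add_of_commute_of_mem_ball (𝕂 := ℝ)
    (hx := (NormedSpace.expSeries_radius_eq_top ℝ ℍ).symm ▸ edist_lt_top _ _)
    (hy := (NormedSpace.expSeries_radius_eq_top ℝ ℍ).symm ▸ edist_lt_top _ _)]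
  exact ((Commute.refl qj).smul_left a).smul_right b

lemma norm_qexp_qi (a : ℝ) : ‖qexp (a • qi)‖ = 1 := by
  rw [qexp, Quaternion.norm_exp]
  have : (a • qi).re = 0 := by rw [Quaternion.re_smul]; simp [qi]
  rw [this, NormedSpace.exp_zero]
  simp

lemma norm_qexp_qj (a : ℝ) : ‖qexp (a • qj)‖ = 1 := by
  rw [qexp, Quaternion.norm_exp]
  have : (a • qj).re = 0 := by rw [Quaternion.re_smul]; simp [qj]
  rw [this, NormedSpace.exp_zero]
  simp

lemma integral_qmul_left (c : ℍ) (f : ℝ × ℝ → ℍ) :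
    ∫ t : ℝ × ℝ, c * f t = c * ∫ t : ℝ × ℝ, f t := by
  by_cases hc : c = 0
  · simp [hc]
  by_cases hf : Integrable f volume
  · exact ContinuousLinearMap.integral_comp_comm (ContinuousLinearMap.mul ℝ ℍ c) hf
  · rw [integral_undef hf, mul_zero, integral_undef]
    intro h
    have h2 := h.const_mul c⁻¹
    simp only [← mul_assoc, inv_mul_cancel₀ hc, one_mul] at h2
    exact hf h2

lemma integral_qmul_right (c : ℍ) (f : ℝ × ℝ → ℍ) :
    ∫ t : ℝ × ℝ, f t * c = (∫ t : ℝ × ℝ, f t) * c := by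
  by_cases hc : c = 0
  · simp [hc]
  by_cases hf : Integrable f volume
  · exact ContinuousLinearMap.integral_comp_comm ((ContinuousLinearMap.mul ℝ ℍ).flip c) hf
  · rw [integral_undef hf, zero_mul, integral_undef]
    intro h
    have h2 := h.mul_const c⁻¹
    simp only [mul_assoc, mul_inv_cancel₀ hc, mul_one] at h2
    exact hf h2

lemma kerI_shift (L : QPParams) (t x ξ : ℝ) :
    KerI L (t - x / 2) ξ = phiI L (-(1 / 2)) x ξ * KerI L t (ξ - L.A * x / L.B) := by
  rw [KerI, KerI, phiI, mul_smul_comm, qexp_add_qi]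
  congr 3
  have hB := L.hB
  field_simp
  ring

lemma kerJ_shift (L : QPParams) (t x ξ : ℝ) :
    KerJ L (t - x / 2) ξ = KerJ L t (ξ - L.A * x / L.B) * phiJ L (-(1 / 2)) x ξ := by
  rw [KerJ, KerJ, phiJ, smul_mul_assoc, qexp_add_qj]
  congr 3
  have hB := L.hB
  field_simp
  ring

/-- relation between the QQPAF and the STQQPFT. -/
theorem qqpaf_eq_stqqpft (L1 L2 : QPParams) (g f : ℝ × ℝ → ℍ)
    (hg2 : MemLp g 2 volume) (hgi : MemLp g ⊤ volume) (hf : MemLp f 2 volume)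
    (x ξ : ℝ × ℝ) :
    QQPAF L1 L2 f g x ξ =
      phiI L1 (-(1 / 2)) x.1 ξ.1 *
        STQQPFT L1 L2 g f x (ξ.1 - L1.A * x.1 / L1.B, ξ.2 - L2.A * x.2 / L2.B) *
        phiJ L2 (-(1 / 2)) x.2 ξ.2 ∧
    ‖QQPAF L1 L2 f g x ξ‖ =
      ‖STQQPFT L1 L2 g f x (ξ.1 - L1.A * x.1 / L1.B, ξ.2 - L2.A * x.2 / L2.B)‖ := by
  have key : QQPAF L1 L2 f g x ξ =
      phiI L1 (-(1 / 2)) x.1 ξ.1 *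
        STQQPFT L1 L2 g f x (ξ.1 - L1.A * x.1 / L1.B, ξ.2 - L2.A * x.2 / L2.B) *
        phiJ L2 (-(1 / 2)) x.2 ξ.2 := by
    rw [QQPAF, ← MeasureTheory.integral_add_right_eq_self
      (fun t : ℝ × ℝ => KerI L1 t.1 ξ.1 *
        (f (t + (1 / 2 : ℝ) • x) * star (g (t - (1 / 2 : ℝ) • x))) * KerJ L2 t.2 ξ.2)
      (-(1 / 2 : ℝ) • x)]
    have h1 : (fun t : ℝ × ℝ => KerI L1 (t + -(1 / 2 : ℝ) • x).1 ξ.1 *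
        (f (t + -(1 / 2 : ℝ) • x + (1 / 2 : ℝ) • x) *
          star (g (t + -(1 / 2 : ℝ) • x - (1 / 2 : ℝ) • x))) *
        KerJ L2 (t + -(1 / 2 : ℝ) • x).2 ξ.2) =
        fun t : ℝ × ℝ => phiI L1 (-(1 / 2)) x.1 ξ.1 *
          ((KerI L1 t.1 (ξ.1 - L1.A * x.1 / L1.B) * (f t * star (g (t - x))) *
            KerJ L2 t.2 (ξ.2 - L2.A * x.2 / L2.B)) * phiJ L2 (-(1 / 2)) x.2 ξ.2) := by
      funext t
      have e1 : t + -(1 / 2 : ℝ) • x + (1 / 2 : ℝ) • x = t := by module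
      have e2 : t + -(1 / 2 : ℝ) • x - (1 / 2 : ℝ) • x = t - x := by module
      have e3 : (t + -(1 / 2 : ℝ) • x).1 = t.1 - x.1 / 2 := by
        simp [Prod.fst_add, Prod.smul_fst, smul_eq_mul]; ring
      have e4 : (t + -(1 / 2 : ℝ) • x).2 = t.2 - x.2 / 2 := by
        simp [Prod.snd_add, Prod.smul_snd, smul_eq_mul]; ring
      rw [e1, e2, e3, e4, kerI_shift, kerJ_shift]
      simp only [mul_assoc]
    rw [h1]
    simp only [integral_qmul_left, integral_qmul_right]
    rw [STQQPFT]
    simp only [mul_assoc]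
  refine ⟨key, ?_⟩
  rw [key, norm_mul, norm_mul, phiI, phiJ, norm_qexp_qi, norm_qexp_qj]
  ring
end
end

section
/- Entropy uncertainty principle for the STQQPFT: let f ∈ L²_ℍ(ℝ²) and g a quaternion window with ‖g‖_{L²}‖f‖_{L²} = 1. Then the entropy E_S(f,g,∧₁,∧₂) = -∫∫_{ℝ²×ℝ²} |(S^{∧₁,∧₂}_{ℍ,g} f)(x,ξ)|² log(|(S^{∧₁,∧₂}_{ℍ,g} f)(x,ξ)|²) dx dξ satisfies E_S(f,g,∧₁,∧₂) ≥ 2/|B₁B₂|. -/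
open MeasureTheory Real
open scoped ENNReal

noncomputable section

/-- Norm of the `i`-kernel. -/
lemma norm_KerI (L : QPParams) (t ξ : ℝ) : ‖KerI L t ξ‖ = 1 / Real.sqrt (2 * π) := by
  unfold KerI qexp
  rw [norm_smul, Quaternion.norm_exp]
  have h1 : (-(L.A * t ^ 2 + L.B * t * ξ + L.C * ξ ^ 2 + L.D * t + L.E * ξ) • qi).re = 0 := by
    rw [Quaternion.re_smul]; simp [qi]
  rw [h1, NormedSpace.exp_zero, norm_one, mul_one,
    Real.norm_of_nonneg (by positivity : (0:ℝ) ≤ 1 / Real.sqrt (2 * π))]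

/-- Norm of the `j`-kernel. -/
lemma norm_KerJ (L : QPParams) (t ξ : ℝ) : ‖KerJ L t ξ‖ = 1 / Real.sqrt (2 * π) := by
  unfold KerJ qexp
  rw [norm_smul, Quaternion.norm_exp]
  have h1 : (-(L.A * t ^ 2 + L.B * t * ξ + L.C * ξ ^ 2 + L.D * t + L.E * ξ) • qj).re = 0 := by
    rw [Quaternion.re_smul]; simp [qj]
  rw [h1, NormedSpace.exp_zero, norm_one, mul_one,
    Real.norm_of_nonneg (by positivity : (0:ℝ) ≤ 1 / Real.sqrt (2 * π))]

/-- Pointwise bound on the STQQPFT under the normalization `‖g‖₂ ‖f‖₂ = 1`. -/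
lemma stqqpft_norm_le (L1 L2 : QPParams) (g f : ℝ × ℝ → ℍ)
    (hg2 : MemLp g 2 volume) (hf : MemLp f 2 volume)
    (hgf : Real.sqrt (∫ t : ℝ × ℝ, ‖g t‖ ^ 2) * Real.sqrt (∫ t : ℝ × ℝ, ‖f t‖ ^ 2) = 1)
    (x ξ : ℝ × ℝ) : ‖STQQPFT L1 L2 g f x ξ‖ ≤ 1 / (2 * π) := by
  have hsq : Real.sqrt (2 * π) * Real.sqrt (2 * π) = 2 * π :=
    Real.mul_self_sqrt (by positivity)
  have hgx : MemLp (fun t => g (t - x)) 2 volume :=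
    hg2.comp_measurePreserving (measurePreserving_sub_right volume x)
  have hconj : Real.HolderConjugate 2 2 := Real.holderConjugate_iff.mpr ⟨one_lt_two, by norm_num⟩
  have hf2 : MemLp f (ENNReal.ofReal 2) volume := by
    rw [ENNReal.ofReal_ofNat]; exact hf
  have hgx2 : MemLp (fun t => g (t - x)) (ENNReal.ofReal 2) volume := by
    rw [ENNReal.ofReal_ofNat]; exact hgx
  have hcs := MeasureTheory.integral_mul_norm_le_Lp_mul_Lq (μ := volume) hconj hf2 hgx2
  have hnat : ∀ y : ℝ, y ^ (2:ℝ) = y ^ 2 := fun y => by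
    rw [show (2:ℝ) = ((2:ℕ):ℝ) by norm_num, Real.rpow_natCast]
  simp only [hnat] at hcs
  rw [← Real.sqrt_eq_rpow, ← Real.sqrt_eq_rpow] at hcs
  have htrans : ∫ t : ℝ × ℝ, ‖g (t - x)‖ ^ 2 = ∫ t : ℝ × ℝ, ‖g t‖ ^ 2 :=
    integral_sub_right_eq_self (fun t => ‖g t‖ ^ 2) x
  rw [htrans] at hcs
  have hcs1 : ∫ t : ℝ × ℝ, ‖f t‖ * ‖g (t - x)‖ ≤ 1 := by
    calc ∫ t : ℝ × ℝ, ‖f t‖ * ‖g (t - x)‖ ≤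
        Real.sqrt (∫ t : ℝ × ℝ, ‖f t‖ ^ 2) * Real.sqrt (∫ t : ℝ × ℝ, ‖g t‖ ^ 2) := hcs
      _ = 1 := by rw [mul_comm]; exact hgf
  calc ‖STQQPFT L1 L2 g f x ξ‖
      ≤ ∫ t : ℝ × ℝ, ‖KerI L1 t.1 ξ.1 * (f t * star (g (t - x))) * KerJ L2 t.2 ξ.2‖ :=
        norm_integral_le_integral_norm _
    _ = ∫ t : ℝ × ℝ, (1 / (2 * π)) * (‖f t‖ * ‖g (t - x)‖) := by
        refine integral_congr_ae (Filter.Eventually.of_forall fun t => ?_)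
        dsimp only
        rw [norm_mul, norm_mul, norm_KerI, norm_KerJ, norm_mul, norm_star, ← hsq]
        field_simp
        simp [Real.sq_sqrt (by positivity : (0:ℝ) ≤ 2 * π)]
    _ = (1 / (2 * π)) * ∫ t : ℝ × ℝ, ‖f t‖ * ‖g (t - x)‖ :=
        integral_const_mul _ _
    _ ≤ (1 / (2 * π)) * 1 := by
        exact mul_le_mul_of_nonneg_left hcs1 (by positivity)
    _ = 1 / (2 * π) := mul_one _

/-- entropy uncertainty principle for the STQQPFT, assuming the norm
identity, the consequence of Lieb's inequality and integrability of the entropy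
integrand. -/
theorem stqqpft_entropy_up (L1 L2 : QPParams) (g f : ℝ × ℝ → ℍ)
    (hg2 : MemLp g 2 volume) (hgi : MemLp g ⊤ volume) (hf : MemLp f 2 volume)
    (hgf : Real.sqrt (∫ t : ℝ × ℝ, ‖g t‖ ^ 2) * Real.sqrt (∫ t : ℝ × ℝ, ‖f t‖ ^ 2) = 1)
    (ha : ∫ z : (ℝ × ℝ) × (ℝ × ℝ), ‖STQQPFT L1 L2 g f z.1 z.2‖ ^ 2 =
      1 / |L1.B * L2.B|)
    (hb : ∀ q : ℝ, 2 ≤ q →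
      ∫ z : (ℝ × ℝ) × (ℝ × ℝ), ‖STQQPFT L1 L2 g f z.1 z.2‖ ^ q ≤
        (2 * π) ^ (2 - q) / |L1.B * L2.B| * (2 / q) ^ 2)
    (hc : Integrable (fun z : (ℝ × ℝ) × (ℝ × ℝ) =>
      ‖STQQPFT L1 L2 g f z.1 z.2‖ ^ 2 * Real.log (‖STQQPFT L1 L2 g f z.1 z.2‖ ^ 2))
      volume) :
    -∫ z : (ℝ × ℝ) × (ℝ × ℝ),
        ‖STQQPFT L1 L2 g f z.1 z.2‖ ^ 2 * Real.log (‖STQQPFT L1 L2 g f z.1 z.2‖ ^ 2) ≥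
      2 / |L1.B * L2.B| := by
  have hB : (0:ℝ) < |L1.B * L2.B| := abs_pos.mpr (mul_ne_zero L1.hB L2.hB)
  have hFint : Integrable
      (fun z : (ℝ × ℝ) × (ℝ × ℝ) => ‖STQQPFT L1 L2 g f z.1 z.2‖ ^ 2) volume := by
    by_contra h
    rw [integral_undef h] at ha
    have h0 : (0:ℝ) < 1 / |L1.B * L2.B| := by positivity
    rw [← ha] at h0
    exact lt_irrefl 0 h0
  have hlog : (1:ℝ) ≤ Real.log (2 * π) := by
    rw [Real.le_log_iff_exp_le (by positivity)]
    have h1 := Real.exp_one_lt_d9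
    have h2 := Real.pi_gt_three
    nlinarith
  have hpt : ∀ z : (ℝ × ℝ) × (ℝ × ℝ),
      ‖STQQPFT L1 L2 g f z.1 z.2‖ ^ 2 * Real.log (‖STQQPFT L1 L2 g f z.1 z.2‖ ^ 2) ≤
        (-(2 * Real.log (2 * π))) * ‖STQQPFT L1 L2 g f z.1 z.2‖ ^ 2 := by
    intro z
    set a := ‖STQQPFT L1 L2 g f z.1 z.2‖ with ha'
    have ha0 : 0 ≤ a := norm_nonneg _
    have hab : a ≤ 1 / (2 * π) := stqqpft_norm_le L1 L2 g f hg2 hf hgf z.1 z.2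
    rcases eq_or_lt_of_le ha0 with h0 | h0
    · simp [← h0]
    · have hsqle : a ^ 2 ≤ (1 / (2 * π)) ^ 2 := pow_le_pow_left₀ ha0 hab 2
      have hlogle : Real.log (a ^ 2) ≤ -(2 * Real.log (2 * π)) := by
        calc Real.log (a ^ 2) ≤ Real.log ((1 / (2 * π)) ^ 2) :=
              Real.log_le_log (by positivity) hsqle
          _ = 2 * Real.log (1 / (2 * π)) := by rw [Real.log_pow]; push_cast; ring
          _ = -(2 * Real.log (2 * π)) := by rw [one_div, Real.log_inv]; ring
      calc a ^ 2 * Real.log (a ^ 2) ≤ a ^ 2 * (-(2 * Real.log (2 * π))) :=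
            mul_le_mul_of_nonneg_left hlogle (sq_nonneg a)
        _ = (-(2 * Real.log (2 * π))) * a ^ 2 := mul_comm _ _
  have hmono := integral_mono hc (hFint.const_mul (-(2 * Real.log (2 * π)))) hpt
  rw [integral_const_mul, ha] at hmono
  have hfin : (-(2 * Real.log (2 * π))) * (1 / |L1.B * L2.B|) ≤ -(2 / |L1.B * L2.B|) := by
    have hpos : (0:ℝ) < 1 / |L1.B * L2.B| := by positivity
    have : 2 / |L1.B * L2.B| = 2 * (1 / |L1.B * L2.B|) := by ring
    rw [this]
    nlinarith
  linarith
end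
end
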